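/- There exists an order ω on the two-sided stationary generalized Pascal-Bratteli diagram B̃ such that the set of ω-minimal infinite paths in X_B̃ has the cardinality of the continuum (2^ℵ₀) while the set of ω-maximal infinite paths is countably infinite. -/

import Mathlib

/-- An infinite path in the two-sided stationary generalized Pascal-Bratteli diagram `B̃`. -/
def IsPathZ (v : ℕ → ℤ) : Prop :=
  ∀ n, v (n + 1) = v n ∨ v (n + 1) = v n + 1

/-- The path `v` is minimal for the order `ω`. -/
def MinPathZ (ω : ℤ × ℕ → Bool) (v : ℕ → ℤ) : Prop :=
  ∀ n : ℕ, v (n + 1) - v n = (if ω (v (n + 1), n + 1) then 1 else 0)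

/-- The path `v` is maximal for the order `ω`. -/
def MaxPathZ (ω : ℤ × ℕ → Bool) (v : ℕ → ℤ) : Prop :=
  ∀ n : ℕ, v (n + 1) - v n = (if ω (v (n + 1), n + 1) then 0 else 1)

namespace PBaux

/-- binary value of the first `m` bits of `x`, most significant first. -/
def rho (x : ℕ → Bool) : ℕ → ℕ
  | 0 => 0
  | m + 1 => 2 * rho x m + (if x m then 1 else 0)

lemma rho_lt (x : ℕ → Bool) (m : ℕ) : rho x m < 2 ^ m := by
  induction m with
  | zero => simp [rho]
  | succ m ih =>
    have h : (2:ℕ) ^ (m+1) = 2 ^ m + 2 ^ m := by ring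
    simp only [rho]
    split <;> omega

/-- sawtooth threshold sequence -/
def tt (k : ℕ) : ℤ := 2 * ((k : ℤ) - 2 ^ (Nat.log 2 k)) + 1

/-- the order -/
def om : ℤ × ℕ → Bool := fun p => if p.1 < 0 then true else decide (tt p.2 ≤ p.1)

/-- designated minimal path for bit sequence `x` (value in ℕ) -/
def vN (x : ℕ → Bool) (n : ℕ) : ℕ :=
  rho x (Nat.log 2 (n+1)) + min (n + 1 - 2 ^ Nat.log 2 (n+1)) (rho x (Nat.log 2 (n+1))) +
    (if rho x (Nat.log 2 (n+1)) < n + 1 - 2 ^ Nat.log 2 (n+1) ∧ x (Nat.log 2 (n+1)) then 1 else 0)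

def vX (x : ℕ → Bool) (n : ℕ) : ℤ := (vN x n : ℤ)

lemma log_eq {n m j : ℕ} (h : n + 1 = 2 ^ m + j) (hj : j < 2 ^ m) :
    Nat.log 2 (n + 1) = m := by
  apply Nat.log_eq_of_pow_le_of_lt_pow (by omega)
  have : (2:ℕ) ^ (m+1) = 2 ^ m + 2 ^ m := by ring
  omega

lemma vN_eq (x : ℕ → Bool) {n m j : ℕ} (h : n + 1 = 2 ^ m + j) (hj : j < 2 ^ m) :
    vN x n = rho x m + min j (rho x m) + (if rho x m < j ∧ x m then 1 else 0) := by
  have hm : Nat.log 2 (n + 1) = m := log_eq h hj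
  have hjj : n + 1 - 2 ^ m = j := by omega
  simp only [vN, hm, hjj]

lemma tt_eq {n m j : ℕ} (h : n + 1 = 2 ^ m + j) (hj : j < 2 ^ m) :
    tt (n + 1) = 2 * (j : ℤ) + 1 := by
  have hm : Nat.log 2 (n + 1) = m := log_eq h hj
  have hcast : ((n : ℤ) + 1) = 2 ^ m + (j : ℤ) := by exact_mod_cast h
  simp only [tt, hm]
  have hc2 : ((n + 1 : ℕ) : ℤ) = 2 ^ m + (j : ℤ) := by exact_mod_cast h
  rw [hc2]
  ring

lemma om_nat (c k : ℕ) : om ((c : ℤ), k) = decide (tt k ≤ (c : ℤ)) := by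
  simp only [om]
  rw [if_neg (not_lt.mpr (Int.natCast_nonneg c))]

/-- key step lemma for designated minimal paths -/
lemma key (x : ℕ → Bool) (n : ℕ) :
    (vN x (n+1) = vN x n ∧ om ((vN x (n+1) : ℤ), n+1) = false) ∨
    (vN x (n+1) = vN x n + 1 ∧ om ((vN x (n+1) : ℤ), n+1) = true) := by
  set m := Nat.log 2 (n+1) with hm
  have h1 : 2 ^ m ≤ n + 1 := Nat.pow_log_le_self 2 n.succ_ne_zero
  have h2 : n + 1 < 2 ^ (m+1) := Nat.lt_pow_succ_log_self one_lt_two _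
  have hpow : (2:ℕ) ^ (m+1) = 2 ^ m + 2 ^ m := by ring
  set j := n + 1 - 2 ^ m with hjdef
  have hj : n + 1 = 2 ^ m + j := by omega
  have hjlt : j < 2 ^ m := by omega
  have hr : rho x m < 2 ^ m := rho_lt x m
  have hv0 : vN x n = rho x m + min j (rho x m) + (if rho x m < j ∧ x m then 1 else 0) :=
    vN_eq x hj hjlt
  have htv : tt (n+1) = 2 * (j : ℤ) + 1 := tt_eq hj hjlt
  by_cases hc : j + 1 < 2 ^ m
  · -- same phase
    have hj' : (n + 1) + 1 = 2 ^ m + (j + 1) := by omega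
    have hv1 : vN x (n+1) =
        rho x m + min (j+1) (rho x m) + (if rho x m < j + 1 ∧ x m then 1 else 0) :=
      vN_eq x hj' hc
    rcases Nat.lt_trichotomy j (rho x m) with h | h | h
    · -- climbing region
      right
      have e1 : min j (rho x m) = j := min_eq_left h.le
      have e2 : min (j+1) (rho x m) = j + 1 := min_eq_left h
      have c0 : ¬ (rho x m < j ∧ x m = true) := by rintro ⟨h', -⟩; omega
      have c1 : ¬ (rho x m < j + 1 ∧ x m = true) := by rintro ⟨h', -⟩; omega
      rw [hv0, hv1, e1, e2, if_neg c0, if_neg c1]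
      refine ⟨by ring, ?_⟩
      rw [om_nat, htv]
      apply decide_eq_true
      push_cast
      omega
    · -- splitting vertex
      have e1 : min j (rho x m) = rho x m := min_eq_right h.ge
      have e2 : min (j+1) (rho x m) = rho x m := min_eq_right (by omega)
      have c0 : ¬ (rho x m < j ∧ x m = true) := by rintro ⟨h', -⟩; omega
      rw [hv0, hv1, e1, e2, if_neg c0]
      by_cases hxm : x m = true
      · right
        rw [if_pos ⟨by omega, hxm⟩]
        refine ⟨by ring, ?_⟩
        rw [om_nat, htv]
        apply decide_eq_true
        push_cast
        omega
      · left
        rw [if_neg (by rintro ⟨-, h'⟩; exact hxm h')]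
        refine ⟨by ring, ?_⟩
        rw [om_nat, htv]
        apply decide_eq_false
        push_cast
        omega
    · -- frozen region
      left
      have e1 : min j (rho x m) = rho x m := min_eq_right h.le
      have e2 : min (j+1) (rho x m) = rho x m := min_eq_right (by omega)
      have c0 : (rho x m < j ∧ x m = true) ↔ (rho x m < j + 1 ∧ x m = true) := by
        constructor <;> (rintro ⟨h', h''⟩; exact ⟨by omega, h''⟩)
      rw [hv0, hv1, e1, e2]
      constructor
      · rw [if_congr c0.symm rfl rfl]
      · rw [om_nat, htv]
        apply decide_eq_false
        split_ifs <;> (push_cast; omega)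
  · -- phase boundary : j + 1 = 2 ^ m
    have hB : j + 1 = 2 ^ m := by omega
    have hj' : (n + 1) + 1 = 2 ^ (m+1) + 0 := by omega
    have hv1' : vN x (n+1) =
        rho x (m+1) + min 0 (rho x (m+1)) + (if rho x (m+1) < 0 ∧ x (m+1) then 1 else 0) :=
      vN_eq x hj' (by positivity)
    have hv1 : vN x (n+1) = 2 * rho x m + (if x m then 1 else 0) := by
      rw [hv1', min_eq_left (Nat.zero_le _), if_neg (by rintro ⟨h', -⟩; omega)]
      simp [rho]
    have hrj : rho x m ≤ j := by omega
    rcases Nat.lt_or_ge (rho x m) j with h | h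
    · -- frozen region
      left
      have e1 : min j (rho x m) = rho x m := min_eq_right h.le
      rw [hv0, hv1, e1]
      have hcond : (rho x m < j ∧ x m = true) ↔ (x m = true) :=
        ⟨fun hh => hh.2, fun hh => ⟨h, hh⟩⟩
      constructor
      · rw [if_congr hcond rfl rfl]
        ring
      · rw [om_nat, htv]
        apply decide_eq_false
        split_ifs <;> (push_cast; omega)
    · -- splitting vertex (rho = j)
      have hje : rho x m = j := by omega
      have e1 : min j (rho x m) = rho x m := min_eq_right (by omega)
      have c0 : ¬ (rho x m < j ∧ x m = true) := by rintro ⟨h', -⟩; omega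
      rw [hv0, hv1, e1, if_neg c0]
      by_cases hxm : x m = true
      · right
        rw [if_pos hxm]
        refine ⟨by omega, ?_⟩
        rw [om_nat, htv]
        apply decide_eq_true
        push_cast
        omega
      · left
        rw [if_neg hxm]
        refine ⟨by omega, ?_⟩
        rw [om_nat, htv]
        apply decide_eq_false
        push_cast
        omega

lemma isPath (x : ℕ → Bool) : IsPathZ (vX x) := by
  intro n
  rcases key x n with ⟨h, -⟩ | ⟨h, -⟩
  · left; simp only [vX, h]
  · right; simp only [vX, h]; push_cast; ring

lemma minPath (x : ℕ → Bool) : MinPathZ om (vX x) := by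
  intro n
  rcases key x n with ⟨h, hw⟩ | ⟨h, hw⟩
  · simp only [h] at hw
    simp only [vX, h, hw]
    simp
  · simp only [h] at hw
    simp only [vX, h, hw]
    push_cast
    ring

lemma vN_pow (x : ℕ → Bool) (m : ℕ) : vN x (2 ^ m - 1) = rho x m := by
  have hp : (1:ℕ) ≤ 2 ^ m := Nat.one_le_two_pow
  have h : (2 ^ m - 1) + 1 = 2 ^ m + 0 := by omega
  rw [vN_eq x h (by positivity), min_eq_left (Nat.zero_le _),
    if_neg (by rintro ⟨h', -⟩; omega)]
  ring

lemma vX_inj : Function.Injective vX := by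
  intro a b hab
  have hr : ∀ m, rho a m = rho b m := by
    intro m
    have h := congrFun hab (2 ^ m - 1)
    simp only [vX, vN_pow] at h
    exact_mod_cast h
  funext m
  have h1 := hr (m + 1)
  have h0 := hr m
  simp only [rho, h0] at h1
  cases ham : a m <;> cases hbm : b m <;> simp [ham, hbm] at h1 ⊢

open Cardinal in
lemma min_card : #{v : ℕ → ℤ | IsPathZ v ∧ MinPathZ om v} = Cardinal.continuum := by
  apply le_antisymm
  · calc #{v : ℕ → ℤ | IsPathZ v ∧ MinPathZ om v} ≤ #(ℕ → ℤ) := Cardinal.mk_set_le _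
      _ = 𝔠 := by
        rw [← Cardinal.power_def, Cardinal.mk_int, Cardinal.mk_nat,
          Cardinal.aleph0_power_aleph0]
  · have hf : Function.Injective
        (fun x : ℕ → Bool =>
          (⟨vX x, isPath x, minPath x⟩ : {v : ℕ → ℤ | IsPathZ v ∧ MinPathZ om v})) := by
      intro a b h
      exact vX_inj (congrArg Subtype.val h)
    calc 𝔠 = #(ℕ → Bool) := by
          rw [← Cardinal.power_def, Cardinal.mk_bool, Cardinal.mk_nat,
            Cardinal.two_power_aleph0]
      _ ≤ _ := Cardinal.mk_le_of_injective hf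

/-! ### Maximal paths -/

lemma max_const (i : ℕ) :
    IsPathZ (fun _ => (-1 - i : ℤ)) ∧ MaxPathZ om (fun _ => (-1 - i : ℤ)) := by
  constructor
  · intro n; left; rfl
  · intro n
    have hneg : (-1 - (i:ℤ)) < 0 := by omega
    simp only [om, if_pos hneg]
    simp

lemma path_mono {v : ℕ → ℤ} (hP : IsPathZ v) : Monotone v := by
  apply monotone_nat_of_le_succ
  intro n
  rcases hP n with h | h <;> omega

lemma cross_unique {v : ℕ → ℤ} (hP : IsPathZ v) {a b : ℕ}
    (ha : v a < 0 ∧ 0 ≤ v (a + 1)) (hb : v b < 0 ∧ 0 ≤ v (b + 1)) : a = b := by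
  by_contra hne
  rcases Nat.lt_or_ge a b with h | h
  · have := path_mono hP (show a + 1 ≤ b by omega)
    omega
  · have hlt : b < a := by omega
    have := path_mono hP (show b + 1 ≤ a by omega)
    omega

open Classical in
noncomputable def crossOpt (v : ℕ → ℤ) : Option ℕ :=
  if h : ∃ n, v n < 0 ∧ 0 ≤ v (n + 1) then some (Nat.find h) else none

lemma max_step {v : ℕ → ℤ} (hP : IsPathZ v) (hM : MaxPathZ om v) (n : ℕ) :
    (v (n+1) = v n ∧ om (v n, n+1) = true) ∨
    (v (n+1) = v n + 1 ∧ om (v n + 1, n+1) = false) := by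
  have hm := hM n
  rcases hP n with h | h
  · left
    refine ⟨h, ?_⟩
    rw [h] at hm
    cases hom : om (v n, n + 1)
    · rw [hom] at hm; simp at hm
    · rfl
  · right
    refine ⟨h, ?_⟩
    rw [h] at hm
    cases hom : om (v n + 1, n + 1)
    · rfl
    · rw [hom] at hm; simp at hm

lemma no_mixed {v w : ℕ → ℤ} (hPv : IsPathZ v) (hMv : MaxPathZ om v)
    (hPw : IsPathZ w) (hMw : MaxPathZ om w)
    (hcr : crossOpt v = crossOpt w) {n : ℕ} (e : v n = w n)
    (hv : v (n+1) = v n ∧ om (v n, n+1) = true)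
    (hw : w (n+1) = w n + 1 ∧ om (w n + 1, n+1) = false) : False := by
  obtain ⟨hv1, hv2⟩ := hv
  obtain ⟨hw1, hw2⟩ := hw
  rw [← e] at hw1 hw2
  simp only [om] at hv2 hw2
  by_cases hneg : v n < 0
  · -- then v n = -1 : w crosses 0 at time n but v does not cross at n
    have h1 : ¬ (v n + 1 < 0) := by
      intro hlt
      rw [if_pos hlt] at hw2
      simp at hw2
    have hvn : v n = -1 := by omega
    have hwc : ∃ k, w k < 0 ∧ 0 ≤ w (k + 1) :=
      ⟨n, by rw [hw1, ← e]; constructor <;> omega⟩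
    have hfw : crossOpt w = some n := by
      simp only [crossOpt]
      rw [dif_pos hwc]
      congr 1
      exact cross_unique hPw (Nat.find_spec hwc)
        ⟨by rw [← e]; omega, by rw [hw1]; omega⟩
    rw [hfw] at hcr
    by_cases hvc : ∃ k, v k < 0 ∧ 0 ≤ v (k + 1)
    · have hfv : crossOpt v = some (Nat.find hvc) := by
        simp only [crossOpt]
        rw [dif_pos hvc]
      rw [hfv] at hcr
      have heq : Nat.find hvc = n := by
        exact Option.some_injective _ hcr
      have hspec := Nat.find_spec hvc
      rw [heq] at hspec
      rw [hv1] at hspec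
      omega
    · have hfv : crossOpt v = none := by
        simp only [crossOpt]
        rw [dif_neg hvc]
      rw [hfv] at hcr
      exact Option.some_ne_none n hcr.symm
  · rw [if_neg hneg] at hv2
    have h1 : ¬ (v n + 1 < 0) := by omega
    rw [if_neg h1] at hw2
    have hA := of_decide_eq_true hv2
    have hB := of_decide_eq_false hw2
    omega

lemma max_det {v w : ℕ → ℤ} (hPv : IsPathZ v) (hMv : MaxPathZ om v)
    (hPw : IsPathZ w) (hMw : MaxPathZ om w)
    (h0 : v 0 = w 0) (hcr : crossOpt v = crossOpt w) : v = w := by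
  funext n
  induction n with
  | zero => exact h0
  | succ n ih =>
    rcases max_step hPv hMv n with hv | hv <;> rcases max_step hPw hMw n with hw | hw
    · rw [hv.1, hw.1, ih]
    · exact (no_mixed hPv hMv hPw hMw hcr ih hv hw).elim
    · exact (no_mixed hPw hMw hPv hMv hcr.symm ih.symm hw hv).elim
    · rw [hv.1, hw.1, ih]

open Cardinal in
lemma max_card : #{v : ℕ → ℤ | IsPathZ v ∧ MaxPathZ om v} = Cardinal.aleph0 := by
  apply le_antisymm
  · have hinj : Function.Injective
        (fun v : {v : ℕ → ℤ | IsPathZ v ∧ MaxPathZ om v} => (v.1 0, crossOpt v.1)) := by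
      intro a b h
      have h1 : a.1 0 = b.1 0 := congrArg Prod.fst h
      have h2 : crossOpt a.1 = crossOpt b.1 := congrArg Prod.snd h
      exact Subtype.ext (max_det a.2.1 a.2.2 b.2.1 b.2.2 h1 h2)
    have : Countable {v : ℕ → ℤ | IsPathZ v ∧ MaxPathZ om v} := hinj.countable
    exact Cardinal.mk_le_aleph0
  · have hf : Function.Injective
        (fun i : ℕ => (⟨fun _ => (-1 - i : ℤ), max_const i⟩ :
          {v : ℕ → ℤ | IsPathZ v ∧ MaxPathZ om v})) := by
      intro a b h
      have h' := congrFun (congrArg Subtype.val h) 0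
      simp only at h'
      omega
    calc Cardinal.aleph0 = #ℕ := Cardinal.mk_nat.symm
      _ ≤ _ := Cardinal.mk_le_of_injective hf

end PBaux

/-- there is an order on `B̃` with continuum many minimal infinite paths and
countably infinitely many maximal infinite paths. -/
theorem two_sided_order_continuum_min_countable_max :
    ∃ ω : ℤ × ℕ → Bool,
      Cardinal.mk {v : ℕ → ℤ | IsPathZ v ∧ MinPathZ ω v} = Cardinal.continuum ∧
      Cardinal.mk {v : ℕ → ℤ | IsPathZ v ∧ MaxPathZ ω v} = Cardinal.aleph0 :=
  ⟨PBaux.om, PBaux.min_card, PBaux.max_card⟩
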